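/- Let κ ≥ 1, let H : ℝ^d → ℝ be (κ+1) times continuously differentiable, and let ḡ : ℝ^d × ℝ^d → ℝ^d satisfy the discrete gradient condition ⟨ḡ(x,y), y−x⟩ = H(y) − H(x) for all x, y, with y ↦ ḡ(x,y) κ times continuously differentiable. If the Jacobian D₂ḡ(x,y) is a symmetric matrix for all y ∈ ℝ^d, then for all v ∈ ℝ^d, D^κ∇H(x)(v,…,v) = (κ+1) · D₂^κḡ(x,x)(v,…,v), where D₂^κḡ(x,x) denotes the κ-th derivative of y ↦ ḡ(x,y) at y = x and D^κ∇H(x) the κ-th derivative of ∇H at x. -/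

import Mathlib

open scoped RealInnerProductSpace
open Filter Topology
section helpers

variable {F : Type*} [NormedAddCommGroup F] [NormedSpace ℝ F]

/-- derivative of `t • w t` at `0` when `w` is merely continuous at `0`. -/
lemma aux_hasDerivAt_id_smul {w : ℝ → F} (hw : ContinuousAt w 0) :
    HasDerivAt (fun t : ℝ => t • w t) (w 0) 0 := by
  rw [hasDerivAt_iff_tendsto_slope]
  have h : ∀ᶠ t in 𝓝[≠] (0:ℝ), w t = slope (fun t : ℝ => t • w t) 0 t := by
    filter_upwards [self_mem_nhdsWithin] with t ht
    have ht' : t ≠ 0 := ht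
    simp [slope_def_module, smul_smul, inv_mul_cancel₀ ht']
  exact Tendsto.congr' h (hw.tendsto.mono_left nhdsWithin_le_nhds)

/-- Leibniz formula for the iterated derivative of `t • w t`. -/
lemma aux_iteratedDeriv_id_smul :
    ∀ (n : ℕ) (w : ℝ → F), ContDiff ℝ (n + 1) w → ∀ t : ℝ,
      iteratedDeriv (n + 1) (fun s : ℝ => s • w s) t
        = t • iteratedDeriv (n + 1) w t + ((n : ℝ) + 1) • iteratedDeriv n w t := by
  intro n
  induction n with
  | zero =>
    intro w hw t
    have hd : HasDerivAt (fun s : ℝ => s • w s)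
        (t • deriv w t + (1 : ℝ) • w t) t := by
      exact ((hasDerivAt_id' t).smul ((hw.differentiable (by norm_num) t).hasDerivAt)).congr_deriv (by simp)
    rw [iteratedDeriv_one, hd.deriv]
    simp [iteratedDeriv_one, iteratedDeriv_zero]
  | succ n ih =>
    intro w hw t
    have hw' : ContDiff ℝ (n + 1) w := hw.of_le (by exact_mod_cast Nat.le_succ (n+1))
    have hprev : iteratedDeriv (n + 1) (fun s : ℝ => s • w s)
        = fun t : ℝ => t • iteratedDeriv (n + 1) w t + ((n : ℝ) + 1) • iteratedDeriv n w t :=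
      funext (ih w hw')
    have hC1 : ContDiff ℝ 1 (iteratedDeriv (n + 1) w) := by
      rw [iteratedDeriv_eq_iterate]
      exact ContDiff.iterate_deriv' 1 (n + 1)
        (by exact_mod_cast hw.of_le (by exact_mod_cast le_of_eq (by ring)))
    have hd1 : HasDerivAt (iteratedDeriv (n + 1) w) (iteratedDeriv (n + 2) w t) t := by
      have h := (hC1.differentiable one_ne_zero t).hasDerivAt
      rwa [show deriv (iteratedDeriv (n+1) w) t = iteratedDeriv (n+2) w t from
        (congrFun (iteratedDeriv_succ (n := n+1)) t).symm] at h
    have hC1' : ContDiff ℝ 1 (iteratedDeriv n w) := by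
      rw [iteratedDeriv_eq_iterate]
      exact ContDiff.iterate_deriv' 1 n
        (hw.of_le (by exact_mod_cast (by omega : 1 + n ≤ n + 1 + 1)))
    have hd2 : HasDerivAt (iteratedDeriv n w) (iteratedDeriv (n + 1) w t) t := by
      have h := (hC1'.differentiable one_ne_zero t).hasDerivAt
      rwa [show deriv (iteratedDeriv n w) t = iteratedDeriv (n+1) w t from
        (congrFun (iteratedDeriv_succ (n := n)) t).symm] at h
    have hsum : HasDerivAt
        (fun t : ℝ => t • iteratedDeriv (n + 1) w t + ((n : ℝ) + 1) • iteratedDeriv n w t)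
        (t • iteratedDeriv (n + 2) w t + (1 : ℝ) • iteratedDeriv (n+1) w t
          + ((n : ℝ) + 1) • iteratedDeriv (n + 1) w t) t := by
      exact (((hasDerivAt_id' t).smul hd1).add (hd2.const_smul ((n : ℝ) + 1))).congr_deriv (by simp)
    rw [iteratedDeriv_succ, hprev, hsum.deriv]
    module

/-- Key 1-d lemma: the `(m+1)`-st derivative of `t • w t` at `0` for `w` of class `C^m`. -/
lemma aux_iteratedDeriv_id_smul_zero (m : ℕ) (w : ℝ → F) (hw : ContDiff ℝ m w) :
    iteratedDeriv (m + 1) (fun s : ℝ => s • w s) 0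
      = ((m : ℝ) + 1) • iteratedDeriv m w 0 := by
  cases m with
  | zero =>
    rw [iteratedDeriv_one, (aux_hasDerivAt_id_smul (hw.continuous.continuousAt)).deriv]
    simp [iteratedDeriv_zero]
  | succ n =>
    -- `m = n + 1 ≥ 1`
    have hprev : iteratedDeriv (n + 1) (fun s : ℝ => s • w s)
        = fun t : ℝ => t • iteratedDeriv (n + 1) w t + ((n : ℝ) + 1) • iteratedDeriv n w t :=
      funext (aux_iteratedDeriv_id_smul n w hw)
    have hcont : ContinuousAt (iteratedDeriv (n + 1) w) 0 := by
      have : ContDiff ℝ 0 (iteratedDeriv (n + 1) w) := by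
        rw [iteratedDeriv_eq_iterate]
        exact ContDiff.iterate_deriv' 0 (n + 1) (by simpa using hw)
      exact this.continuous.continuousAt
    have hC1' : ContDiff ℝ 1 (iteratedDeriv n w) := by
      rw [iteratedDeriv_eq_iterate]
      exact ContDiff.iterate_deriv' 1 n (by rw [show 1 + n = n + 1 from by omega]; exact_mod_cast hw)
    have hd2 : HasDerivAt (iteratedDeriv n w) (iteratedDeriv (n + 1) w 0) 0 := by
      have h := (hC1'.differentiable one_ne_zero 0).hasDerivAt
      rwa [show deriv (iteratedDeriv n w) 0 = iteratedDeriv (n+1) w 0 from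
        (congrFun (iteratedDeriv_succ (n := n)) 0).symm] at h
    have hsum : HasDerivAt
        (fun t : ℝ => t • iteratedDeriv (n + 1) w t + ((n : ℝ) + 1) • iteratedDeriv n w t)
        (iteratedDeriv (n + 1) w 0 + ((n : ℝ) + 1) • iteratedDeriv (n + 1) w 0) 0 :=
      (aux_hasDerivAt_id_smul hcont).add (hd2.const_smul ((n : ℝ) + 1))
    rw [iteratedDeriv_succ, hprev, hsum.deriv]
    push_cast
    module

variable {E : Type*} [NormedAddCommGroup E] [NormedSpace ℝ E]

/-- Derivatives along a line compute iterated Fréchet derivatives on diagonal vectors. -/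
lemma aux_iteratedDeriv_line :
    ∀ (n : ℕ) (f : E → F), ContDiff ℝ n f → ∀ (x v : E) (t : ℝ),
      iteratedDeriv n (fun s : ℝ => f (x + s • v)) t
        = iteratedFDeriv ℝ n f (x + t • v) (fun _ => v) := by
  intro n
  induction n with
  | zero => intro f hf x v t; simp [iteratedDeriv_zero]
  | succ n ih =>
    intro f hf x v t
    have hline : ∀ s : ℝ, HasDerivAt (fun s : ℝ => x + s • v) v s := by
      intro s
      simpa using ((hasDerivAt_id s).smul_const v).const_add x
    have hfd : Differentiable ℝ f := hf.differentiable (by simp)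
    have hd : deriv (fun s : ℝ => f (x + s • v)) = fun s : ℝ => fderiv ℝ f (x + s • v) v := by
      funext s
      exact ((hfd (x + s • v)).hasFDerivAt.comp_hasDerivAt s (hline s)).deriv
    have hfr : ContDiff ℝ n (fderiv ℝ f) :=
      hf.fderiv_right (by exact_mod_cast le_rfl)
    have hf1 : ContDiff ℝ n (fun y => fderiv ℝ f y v) :=
      hfr.clm_apply contDiff_const
    rw [iteratedDeriv_succ', hd, ih _ hf1 x v t, iteratedFDeriv_succ_apply_right,
      iteratedFDeriv_clm_apply_const_apply hfr le_rfl]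
    congr

end helpers

/-- If a discrete gradient `ḡ` of a `C^{κ+1}` function `H` is `C^κ` in its
second argument and its Jacobian in the second argument is symmetric for all `y`, then
`D^κ∇H(x)v^κ = (κ+1) · D₂^κḡ(x,x)v^κ`. -/
theorem symmetric_jacobian_discrete_gradient_derivative_relation
    (d κ : ℕ) (hκ : 1 ≤ κ)
    (H : EuclideanSpace ℝ (Fin d) → ℝ) (hH : ContDiff ℝ (κ + 1) H)
    (g : EuclideanSpace ℝ (Fin d) → EuclideanSpace ℝ (Fin d) → EuclideanSpace ℝ (Fin d))
    (hdg : ∀ x y, ⟪g x y, y - x⟫ = H y - H x)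
    (x : EuclideanSpace ℝ (Fin d))
    (hgk : ContDiff ℝ κ (g x))
    (hsymm : ∀ y u v : EuclideanSpace ℝ (Fin d),
      ⟪fderiv ℝ (g x) y u, v⟫ = ⟪fderiv ℝ (g x) y v, u⟫) :
    ∀ v : EuclideanSpace ℝ (Fin d),
      iteratedFDeriv ℝ κ (gradient H) x (fun _ => v) =
        ((κ : ℝ) + 1) • iteratedFDeriv ℝ κ (g x) x (fun _ => v) := by
  intro v
  obtain ⟨m, rfl⟩ : ∃ m, κ = m + 1 := ⟨κ - 1, (Nat.succ_pred_eq_of_pos hκ).symm⟩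
  have hgd : Differentiable ℝ (g x) := hgk.differentiable (by simp)
  have hHd : Differentiable ℝ H := hH.differentiable (by simp)
  -- Step 1: the key pointwise identity `∇H y = g x y + D₂g(x,y)(y - x)`.
  have key : ∀ y, gradient H y = g x y + fderiv ℝ (g x) y (y - x) := by
    intro y
    refine ext_inner_right ℝ fun u => ?_
    have hfun : (fun z : EuclideanSpace ℝ (Fin d) => ⟪g x z, z - x⟫)
        = fun z => H z - H x := funext fun z => hdg x z
    have hL : fderiv ℝ (fun z : EuclideanSpace ℝ (Fin d) => ⟪g x z, z - x⟫) y u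
        = ⟪g x y, fderiv ℝ (fun z : EuclideanSpace ℝ (Fin d) => z - x) y u⟫
          + ⟪fderiv ℝ (g x) y u, y - x⟫ :=
      fderiv_inner_apply ℝ (hgd y) ((differentiable_id.sub_const x) y) u
    have hsub : fderiv ℝ (fun z : EuclideanSpace ℝ (Fin d) => z - x) y u = u := by
      rw [fderiv_sub_const]; simp
    have hR : fderiv ℝ (fun z : EuclideanSpace ℝ (Fin d) => H z - H x) y u
        = fderiv ℝ H y u := by rw [fderiv_sub_const]
    have hgradin : ⟪gradient H y, u⟫ = fderiv ℝ H y u := by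
      simp only [gradient]; exact InnerProductSpace.toDual_symm_apply
    rw [hgradin, inner_add_left, ← hR, ← hfun, hL, hsub, hsymm y (y - x) u]
  -- Step 2: restrict to the line `t ↦ x + t • v`.
  set G : ℝ → EuclideanSpace ℝ (Fin d) := fun t => g x (x + t • v) with hGdef
  set P : ℝ → EuclideanSpace ℝ (Fin d) := fun t => gradient H (x + t • v) with hPdef
  have hlineC : ContDiff ℝ (m + 1 : ℕ) (fun t : ℝ => x + t • v) :=
    contDiff_const.add (contDiff_id.smul contDiff_const)
  have hline : ∀ s : ℝ, HasDerivAt (fun s : ℝ => x + s • v) v s := fun s => by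
    simpa using ((hasDerivAt_id s).smul_const v).const_add x
  have hG : ContDiff ℝ (m + 1 : ℕ) G := hgk.comp hlineC
  have hgradC : ContDiff ℝ (m + 1 : ℕ) (gradient H) := by
    have h1 : ContDiff ℝ (m + 1 : ℕ) (fderiv ℝ H) := hH.fderiv_right le_rfl
    exact ((InnerProductSpace.toDual ℝ _).symm.contDiff.comp h1 :)
  have hP : ContDiff ℝ (m + 1 : ℕ) P := hgradC.comp hlineC
  have hW : deriv G = fun t : ℝ => fderiv ℝ (g x) (x + t • v) v := by
    funext s
    exact ((hgd (x + s • v)).hasFDerivAt.comp_hasDerivAt s (hline s)).deriv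
  -- Step 3: `P t = G t + t • (deriv G) t`.
  have hPG : P = fun t : ℝ => G t + t • deriv G t := by
    funext t
    rw [hPdef, hW]
    simp only [key (x + t • v), add_sub_cancel_left, map_smul]; rfl
  have hWc : ContDiff ℝ (m : ℕ) (deriv G) := by
    have : ContDiff ℝ ((m : WithTop ℕ∞) + 1) G := by exact_mod_cast hG
    exact (contDiff_succ_iff_deriv.mp this).2.2
  -- Step 4: compute the `(m+1)`-st derivative of `P` at `0`.
  have hQ : iteratedDeriv (m + 1) (fun t : ℝ => t • deriv G t) 0
      = ((m : ℝ) + 1) • iteratedDeriv (m + 1) G 0 := by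
    rw [aux_iteratedDeriv_id_smul_zero m (deriv G) hWc, iteratedDeriv_succ']
  have hQc : ContDiff ℝ (m + 1 : ℕ) (fun t : ℝ => t • deriv G t) := by
    have he : (fun t : ℝ => t • deriv G t) = fun t => P t - G t := by
      funext t; rw [hPG]; simp
    rw [he]; exact hP.sub hG
  have hPsum : iteratedDeriv (m + 1) P 0
      = iteratedDeriv (m + 1) G 0 + iteratedDeriv (m + 1) (fun t : ℝ => t • deriv G t) 0 := by
    rw [hPG]
    rw [iteratedDeriv_eq_iteratedFDeriv, iteratedDeriv_eq_iteratedFDeriv,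
      iteratedDeriv_eq_iteratedFDeriv]
    have := iteratedFDeriv_add_apply (i := m + 1) (x := (0:ℝ))
      (f := G) (g := fun t : ℝ => t • deriv G t) (by exact_mod_cast hG.contDiffAt) (by exact_mod_cast hQc.contDiffAt)
    have hfe : (fun t : ℝ => G t + t • deriv G t) = G + fun t : ℝ => t • deriv G t := rfl
    rw [hfe, this, ContinuousMultilinearMap.add_apply]
  -- Step 5: convert to iterated Fréchet derivatives.
  have hDP : iteratedDeriv (m + 1) P 0
      = iteratedFDeriv ℝ (m + 1) (gradient H) x (fun _ => v) := by
    have := aux_iteratedDeriv_line (m + 1) (gradient H) hgradC x v 0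
    simpa using this
  have hDG : iteratedDeriv (m + 1) G 0
      = iteratedFDeriv ℝ (m + 1) (g x) x (fun _ => v) := by
    have := aux_iteratedDeriv_line (m + 1) (g x) hgk x v 0
    simpa using this
  rw [← hDP, ← hDG, hPsum, hQ, hDG]
  push_cast
  module
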